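/- Subsumption of acyclic MRSs is well-founded: if σ ⊏ ρ for acyclic MRSs then rank(σ) < rank(ρ), where rank(σ) = |Π(σ)| + Σ_{(π,i)∈Π(σ)} r(θ(δ(q̄_i,π))) + (|Π(σ)| − |Q_σ|); consequently there is no infinite strictly decreasing chain of acyclic MRSs. -/

import Mathlib

/-! Multi-rooted feature structures (MRSs).
`pathδ` extends the partial transition function `δ` to paths (lists of features). -/

variable {Nodes Feats Types : Type}

def pathδ (δ : Nodes → Feats → Option Nodes) : Nodes → List Feats → Option Nodes
  | q, [] => some q
  | q, f :: π => (δ q f).bind fun q' => pathδ δ q' π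

/-- A multi-rooted feature structure: a finite set of nodes `Q`, an ordered
repetition-free list of roots, and a partial transition function `δ : Q × Feats ⇀ Q`,
with every node reachable from some root. -/
structure MRS (Nodes Feats : Type) where
  Q : Finset Nodes
  roots : List Nodes
  nodup : roots.Nodup
  roots_mem : ∀ q ∈ roots, q ∈ Q
  δ : Nodes → Feats → Option Nodes
  dom : ∀ q f, (δ q f).isSome → q ∈ Q
  closed : ∀ q f q', δ q f = some q' → q' ∈ Q
  reach : ∀ q ∈ Q, ∃ (i : ℕ) (π : List Feats) (r : Nodes),
    roots[i]? = some r ∧ pathδ δ r π = some q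

/-- The node reached by following path `π` from the `i`-th root (if defined). -/
def MRS.pathFrom (σ : MRS Nodes Feats) (i : ℕ) (π : List Feats) : Option Nodes :=
  (σ.roots[i]?).bind fun r => pathδ σ.δ r π

/-- `Π(σ) = {(π, i) | δ_σ(q̄_i, π) is defined}`. -/
def MRS.Pi (σ : MRS Nodes Feats) : Set (List Feats × ℕ) :=
  {p | (σ.pathFrom p.2 p.1).isSome}

/-- An MRS is cyclic if some node returns to itself along a nonempty path. -/
def MRS.Cyclic (σ : MRS Nodes Feats) : Prop :=
  ∃ q ∈ σ.Q, ∃ α : List Feats, α ≠ [] ∧ pathδ σ.δ q α = some q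

def MRS.Acyclic (σ : MRS Nodes Feats) : Prop := ¬ σ.Cyclic

lemma pathδ_append (δ : Nodes → Feats → Option Nodes) (q : Nodes) (π π' : List Feats) :
    pathδ δ q (π ++ π') = (pathδ δ q π).bind fun q' => pathδ δ q' π' := by
  induction π generalizing q with
  | nil => simp [pathδ]
  | cons f t ih => cases hq : δ q f <;> simp [pathδ, hq, ih]

lemma MRS.mem_of_pathδ (σ : MRS Nodes Feats) {q q' : Nodes} {π : List Feats}
    (hq : q ∈ σ.Q) (h : pathδ σ.δ q π = some q') : q' ∈ σ.Q := by
  induction π generalizing q with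
  | nil => simp [pathδ] at h; exact h ▸ hq
  | cons f t ih =>
    simp only [pathδ, Option.bind_eq_some_iff] at h
    obtain ⟨a, ha, hrest⟩ := h
    exact ih (σ.closed q f a ha) hrest

lemma morphism_pathδ {σ ρ : MRS Nodes Feats} {h : Nodes → Nodes}
    (hδ : ∀ q f q', σ.δ q f = some q' → ρ.δ (h q) f = some (h q'))
    {q q' : Nodes} {π : List Feats} (hp : pathδ σ.δ q π = some q') :
    pathδ ρ.δ (h q) π = some (h q') := by
  induction π generalizing q with
  | nil => simp [pathδ] at hp ⊢; exact congrArg h hp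
  | cons f t ih =>
    simp only [pathδ, Option.bind_eq_some_iff] at hp ⊢
    obtain ⟨a, ha, hrest⟩ := hp
    exact ⟨h a, hδ _ _ _ ha, ih hrest⟩

lemma MRS.length_lt_of_acyclic (σ : MRS Nodes Feats) (ha : σ.Acyclic) {q q' : Nodes}
    {π : List Feats} (hq : q ∈ σ.Q) (hp : pathδ σ.δ q π = some q') : π.length ≤ σ.Q.card := by
  by_contra hlen
  push_neg at hlen
  have hsplit : ∀ j, ∃ qj, pathδ σ.δ q (π.take j) = some qj := by
    intro j
    have h2 : pathδ σ.δ q (π.take j ++ π.drop j) = some q' := by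
      rw [List.take_append_drop]; exact hp
    rw [pathδ_append] at h2
    rcases Option.bind_eq_some_iff.mp h2 with ⟨qj, hqj, _⟩
    exact ⟨qj, hqj⟩
  set f : ℕ → Nodes := fun j => (pathδ σ.δ q (π.take j)).getD q with hf
  have hmaps : ∀ j ∈ Finset.range (π.length + 1), f j ∈ σ.Q := by
    intro j _
    obtain ⟨qj, hqj⟩ := hsplit j
    simpa [hf, hqj] using σ.mem_of_pathδ hq hqj
  have hcard : σ.Q.card < (Finset.range (π.length + 1)).card := by
    simpa using Nat.lt_succ_of_lt hlen
  obtain ⟨x, hx, y, hy, hxy, hfxy⟩ :=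
    Finset.exists_ne_map_eq_of_card_lt_of_maps_to hcard hmaps
  -- wlog x < y
  have key : ∀ j k, j < k → k < π.length + 1 → f j = f k → False := by
    intro j k hjk hk hfeq
    obtain ⟨qj, hqj⟩ := hsplit j
    obtain ⟨qk, hqk⟩ := hsplit k
    have hqjk : qj = qk := by simpa [hf, hqj, hqk] using hfeq
    set α := (π.take k).drop j with hα
    have htk : π.take k = π.take j ++ α := by
      conv_lhs => rw [← List.take_append_drop j (π.take k)]
      rw [List.take_take, inf_eq_left.mpr hjk.le]
    have hcyc : pathδ σ.δ qj α = some qj := by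
      have := hqk
      rw [htk, pathδ_append, hqj] at this
      simpa [hqjk] using this
    have hne : α ≠ [] := by
      have : α.length = k - j := by
        simp [hα, List.length_drop, List.length_take]
        omega
      intro hnil
      rw [hnil] at this
      simp at this
      omega
    exact ha ⟨qj, σ.mem_of_pathδ hq hqj, α, hne, hcyc⟩
  rcases lt_or_gt_of_ne hxy with h | h
  · exact key x y h (Finset.mem_range.mp hy) hfxy
  · exact key y x h (Finset.mem_range.mp hx) hfxy.symm

lemma MRS.pathFrom_exists {σ : MRS Nodes Feats} {p : List Feats × ℕ} (hp : p ∈ σ.Pi) :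
    ∃ q, σ.pathFrom p.2 p.1 = some q ∧ q ∈ σ.Q := by
  obtain ⟨q, hq⟩ := Option.isSome_iff_exists.mp hp
  refine ⟨q, hq, ?_⟩
  unfold MRS.pathFrom at hq
  rcases Option.bind_eq_some_iff.mp hq with ⟨rt, hrt, hpath⟩
  exact σ.mem_of_pathδ (σ.roots_mem rt (List.mem_of_getElem? hrt)) hpath

lemma MRS.reach_Pi {σ : MRS Nodes Feats} {q : Nodes} (hq : q ∈ σ.Q) :
    ∃ p ∈ σ.Pi, σ.pathFrom p.2 p.1 = some q := by
  obtain ⟨i, π, rt, hrt, hpath⟩ := σ.reach q hq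
  have : σ.pathFrom i π = some q := by simp [MRS.pathFrom, hrt, hpath]
  exact ⟨(π, i), by simp [MRS.Pi, this], this⟩

lemma MRS.Pi_finite [Finite Feats] (σ : MRS Nodes Feats) (ha : σ.Acyclic) : σ.Pi.Finite := by
  have hsub : σ.Pi ⊆ {π : List Feats | π.length ≤ σ.Q.card} ×ˢ (Set.Iio σ.roots.length) := by
    rintro ⟨π, i⟩ hp
    obtain ⟨q, hq, _⟩ := MRS.pathFrom_exists hp
    unfold MRS.pathFrom at hq
    rcases Option.bind_eq_some_iff.mp hq with ⟨rt, hrt, hpath⟩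
    constructor
    · exact σ.length_lt_of_acyclic ha (σ.roots_mem rt (List.mem_of_getElem? hrt)) hpath
    · simpa [Set.mem_Iio] using (List.getElem?_eq_some_iff.mp hrt).1
  exact Set.Finite.subset (Set.Finite.prod (List.finite_length_le _ _) (Set.finite_Iio _)) hsub

/-- An MRS subsumption morphism: maps the `i`-th root to the `i`-th root (so the
numbers of roots agree), maps `Q_σ` into `Q_ρ`, is monotone on node types, and
commutes with the transition function. -/
def MRSIsMorphism [PartialOrder Types] (θ : Nodes → Types)
    (σ ρ : MRS Nodes Feats) (h : Nodes → Nodes) : Prop :=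
  ρ.roots = σ.roots.map h ∧ (∀ q ∈ σ.Q, h q ∈ ρ.Q) ∧ (∀ q ∈ σ.Q, θ q ≤ θ (h q)) ∧
  ∀ q f q', σ.δ q f = some q' → ρ.δ (h q) f = some (h q')

def MRSSubsumes [PartialOrder Types] (θ : Nodes → Types) (σ ρ : MRS Nodes Feats) : Prop :=
  ∃ h, MRSIsMorphism θ σ ρ h

def MRSStrictlySubsumes [PartialOrder Types] (θ : Nodes → Types)
    (σ ρ : MRS Nodes Feats) : Prop :=
  MRSSubsumes θ σ ρ ∧ ¬ MRSSubsumes θ ρ σ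

/-- `rank(σ) = |Π(σ)| + Θ(σ) + (|Π(σ)| − |Q_σ|)` (computed in `ℤ`), where `Θ(σ)`
sums the `r`-rank of the type of the node reached by each root-path pair. -/
noncomputable def MRS.rank (r : Types → ℕ) (θ : Nodes → Types) (σ : MRS Nodes Feats) : ℤ :=
  (σ.Pi.ncard : ℤ) +
    ((∑ᶠ p ∈ σ.Pi, (σ.pathFrom p.2 p.1).elim 0 fun q => r (θ q) : ℕ) : ℤ) +
    ((σ.Pi.ncard : ℤ) - (σ.Q.card : ℤ))

section Morph
variable [PartialOrder Types] {θ : Nodes → Types}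

lemma morphism_pathFrom {σ ρ : MRS Nodes Feats} {h : Nodes → Nodes}
    (hm : MRSIsMorphism θ σ ρ h) {i : ℕ} {π : List Feats} {q : Nodes}
    (hp : σ.pathFrom i π = some q) : ρ.pathFrom i π = some (h q) := by
  obtain ⟨hroots, _, _, hδ⟩ := hm
  unfold MRS.pathFrom at hp ⊢
  rcases Option.bind_eq_some_iff.mp hp with ⟨rt, hrt, hpath⟩
  have hrt' : ρ.roots[i]? = some (h rt) := by
    rw [hroots, List.getElem?_map, hrt]; rfl
  simp [hrt', morphism_pathδ hδ hpath]

lemma morphism_Pi_subset {σ ρ : MRS Nodes Feats} {h : Nodes → Nodes}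
    (hm : MRSIsMorphism θ σ ρ h) : σ.Pi ⊆ ρ.Pi := by
  intro p hp
  obtain ⟨q, hq, _⟩ := MRS.pathFrom_exists hp
  simp [MRS.Pi, morphism_pathFrom hm hq]

end Morph

lemma MRS.pathFrom_append (σ : MRS Nodes Feats) (i : ℕ) (π π' : List Feats) :
    σ.pathFrom i (π ++ π') = (σ.pathFrom i π).bind fun q => pathδ σ.δ q π' := by
  unfold MRS.pathFrom
  cases σ.roots[i]? <;> simp [pathδ_append]

lemma endpoints_aux (g : (List Feats × ℕ) → Option Nodes) (s : Set (List Feats × ℕ))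
    (hfin : s.Finite) :
    {q : Nodes | ∃ p ∈ s, g p = some q}.Finite ∧
      {q : Nodes | ∃ p ∈ s, g p = some q}.ncard ≤ s.ncard := by
  have hsub : some '' {q : Nodes | ∃ p ∈ s, g p = some q} ⊆ g '' s := by
    rintro x ⟨q, ⟨p, hp, hgp⟩, rfl⟩; exact ⟨p, hp, hgp⟩
  have hfin2 : (some '' {q : Nodes | ∃ p ∈ s, g p = some q}).Finite :=
    (hfin.image g).subset hsub
  have hfin1 : {q : Nodes | ∃ p ∈ s, g p = some q}.Finite :=
    Set.Finite.of_finite_image hfin2 (Option.some_injective _).injOn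
  refine ⟨hfin1, ?_⟩
  calc {q : Nodes | ∃ p ∈ s, g p = some q}.ncard
      = (some '' {q : Nodes | ∃ p ∈ s, g p = some q}).ncard :=
        (Set.ncard_image_of_injective _ (Option.some_injective _)).symm
    _ ≤ (g '' s).ncard := Set.ncard_le_ncard hsub (hfin.image g)
    _ ≤ s.ncard := Set.ncard_image_le hfin

lemma MRS.card_le_ncard_Pi [Finite Feats] (σ : MRS Nodes Feats) (ha : σ.Acyclic) :
    σ.Q.card ≤ σ.Pi.ncard := by
  have hfin := σ.Pi_finite ha
  have ⟨hf, hle⟩ := endpoints_aux (fun p => σ.pathFrom p.2 p.1) σ.Pi hfin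
  have hQsub : (↑σ.Q : Set Nodes) ⊆ {q | ∃ p ∈ σ.Pi, σ.pathFrom p.2 p.1 = some q} := by
    intro q hq
    exact MRS.reach_Pi (Finset.mem_coe.mp hq)
  calc σ.Q.card = (↑σ.Q : Set Nodes).ncard := (Set.ncard_coe_finset _).symm
    _ ≤ _ := Set.ncard_le_ncard hQsub hf
    _ ≤ σ.Pi.ncard := hle

section Main
variable [Finite Feats] [PartialOrder Types]

lemma rank_lt_of_strict (r : Types → ℕ) (hr : ∀ t t' : Types, t < t' → r t < r t')
    (θ : Nodes → Types) (σ ρ : MRS Nodes Feats) (hσa : σ.Acyclic) (hρa : ρ.Acyclic)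
    (hs : MRSStrictlySubsumes θ σ ρ) : MRS.rank r θ σ < MRS.rank r θ ρ := by
  classical
  obtain ⟨⟨h, hm⟩, hnsub⟩ := hs
  have hr' : ∀ t t', t ≤ t' → r t ≤ r t' := fun t t' ht =>
    ht.lt_or_eq.elim (fun hlt => (hr _ _ hlt).le) (fun he => he ▸ le_rfl)
  have hPs : σ.Pi.Finite := σ.Pi_finite hσa
  have hPr : ρ.Pi.Finite := ρ.Pi_finite hρa
  have hsubP : σ.Pi ⊆ ρ.Pi := morphism_Pi_subset hm
  set fσ : List Feats × ℕ → ℕ := fun p => (σ.pathFrom p.2 p.1).elim 0 fun q => r (θ q) with hfσ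
  set fρ : List Feats × ℕ → ℕ := fun p => (ρ.pathFrom p.2 p.1).elim 0 fun q => r (θ q) with hfρ
  have hpt : ∀ p ∈ σ.Pi, fσ p ≤ fρ p := by
    intro p hp
    obtain ⟨q, hq, hqQ⟩ := MRS.pathFrom_exists hp
    have h2 := morphism_pathFrom hm hq
    simp only [hfσ, hfρ, hq, h2, Option.elim]
    exact hr' _ _ (hm.2.2.1 q hqQ)
  have hFsub : hPs.toFinset ⊆ hPr.toFinset :=
    Set.Finite.toFinset_subset_toFinset.mpr hsubP
  -- abbreviations
  have hrankσ : MRS.rank r θ σ = (σ.Pi.ncard : ℤ) + ((∑ p ∈ hPs.toFinset, fσ p : ℕ) : ℤ) +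
      ((σ.Pi.ncard : ℤ) - (σ.Q.card : ℤ)) := by
    rw [MRS.rank, finsum_mem_eq_finite_toFinset_sum _ hPs]
  have hrankρ : MRS.rank r θ ρ = (ρ.Pi.ncard : ℤ) + ((∑ p ∈ hPr.toFinset, fρ p : ℕ) : ℤ) +
      ((ρ.Pi.ncard : ℤ) - (ρ.Q.card : ℤ)) := by
    rw [MRS.rank, finsum_mem_eq_finite_toFinset_sum _ hPr]
  have ha₁b₁ : σ.Pi.ncard ≤ ρ.Pi.ncard := Set.ncard_le_ncard hsubP hPr
  have hsum_le : ∑ p ∈ hPs.toFinset, fσ p ≤ ∑ p ∈ hPr.toFinset, fρ p :=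
    le_trans (Finset.sum_le_sum (fun p hp => hpt p ((Set.Finite.mem_toFinset _).mp hp)))
      (Finset.sum_le_sum_of_subset hFsub)
  have hqσ : σ.Q.card ≤ σ.Pi.ncard := σ.card_le_ncard_Pi hσa
  have hqρ : ρ.Q.card ≤ ρ.Pi.ncard := ρ.card_le_ncard_Pi hρa
  -- counting: ρ.Q.card + σ.Pi.ncard ≤ σ.Q.card + ρ.Pi.ncard
  have hcount : ρ.Q.card + σ.Pi.ncard ≤ σ.Q.card + ρ.Pi.ncard := by
    have hdfin : (ρ.Pi \ σ.Pi).Finite := hPr.subset Set.diff_subset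
    set S₁ : Set Nodes := h '' ↑σ.Q with hS₁
    have hS₂fin : {q : Nodes | ∃ p ∈ ρ.Pi \ σ.Pi, ρ.pathFrom p.2 p.1 = some q}.Finite := by
      simpa using (endpoints_aux (fun p => ρ.pathFrom p.2 p.1) _ hdfin).1
    have hS₂le : {q : Nodes | ∃ p ∈ ρ.Pi \ σ.Pi, ρ.pathFrom p.2 p.1 = some q}.ncard ≤
        (ρ.Pi \ σ.Pi).ncard := by
      simpa using (endpoints_aux (fun p => ρ.pathFrom p.2 p.1) _ hdfin).2
    set S₂ : Set Nodes := {q | ∃ p ∈ ρ.Pi \ σ.Pi, ρ.pathFrom p.2 p.1 = some q} with hS₂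
    have hQsub : (↑ρ.Q : Set Nodes) ⊆ S₁ ∪ S₂ := by
      intro q' hq'
      obtain ⟨p, hp, hval⟩ := MRS.reach_Pi (Finset.mem_coe.mp hq')
      by_cases hpσ : p ∈ σ.Pi
      · obtain ⟨q, hq, hqQ⟩ := MRS.pathFrom_exists hpσ
        have h2 := morphism_pathFrom hm hq
        left
        exact ⟨q, hqQ, by rw [hval] at h2; exact (Option.some_injective _ h2).symm ▸ rfl⟩
      · right; exact ⟨p, ⟨hp, hpσ⟩, hval⟩
    have hS₁le : S₁.ncard ≤ σ.Q.card := by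
      rw [← Set.ncard_coe_finset σ.Q]
      exact Set.ncard_image_le σ.Q.finite_toSet
    have hdiff : (ρ.Pi \ σ.Pi).ncard = ρ.Pi.ncard - σ.Pi.ncard :=
      Set.ncard_diff hsubP hPs
    have hQle : ρ.Q.card ≤ S₁.ncard + S₂.ncard := by
      rw [← Set.ncard_coe_finset ρ.Q]
      exact le_trans
        (Set.ncard_le_ncard hQsub ((σ.Q.finite_toSet.image h).union hS₂fin))
        (Set.ncard_union_le _ _)
    omega
  have hle : MRS.rank r θ σ ≤ MRS.rank r θ ρ := by
    rw [hrankσ, hrankρ]; omega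
  refine lt_of_le_of_ne hle ?_
  intro heq
  -- equality case: derive the inverse morphism, contradicting hnsub
  have hkey : σ.Pi.ncard = ρ.Pi.ncard ∧
      (∑ p ∈ hPs.toFinset, fσ p) = (∑ p ∈ hPr.toFinset, fρ p) ∧ σ.Q.card = ρ.Q.card := by
    rw [hrankσ, hrankρ] at heq
    omega
  obtain ⟨hncard, hsum_eq, hcard_eq⟩ := hkey
  have hPeq : σ.Pi = ρ.Pi := Set.eq_of_subset_of_ncard_le hsubP (le_of_eq hncard.symm) hPr
  have hFeq : hPs.toFinset = hPr.toFinset := by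
    ext p; simp [Set.Finite.mem_toFinset, hPeq]
  have hptEq : ∀ p ∈ σ.Pi, fσ p = fρ p := by
    by_contra hc
    push_neg at hc
    obtain ⟨p, hp, hne⟩ := hc
    have : ∑ p ∈ hPs.toFinset, fσ p < ∑ p ∈ hPs.toFinset, fρ p :=
      Finset.sum_lt_sum (fun p hp => hpt p ((Set.Finite.mem_toFinset _).mp hp))
        ⟨p, (Set.Finite.mem_toFinset _).mpr hp, lt_of_le_of_ne (hpt p hp) hne⟩
    rw [hsum_eq, hFeq] at this
    exact lt_irrefl _ this
  have hθeq : ∀ q ∈ σ.Q, θ q = θ (h q) := by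
    intro q hq
    obtain ⟨p, hp, hval⟩ := MRS.reach_Pi hq
    have h2 := morphism_pathFrom hm hval
    have h3 := hptEq p hp
    simp only [hfσ, hfρ, hval, h2, Option.elim] at h3
    by_contra hne
    exact absurd h3 (Nat.ne_of_lt (hr _ _ (lt_of_le_of_ne (hm.2.2.1 q hq) hne)))
  have hsurj : ∀ q' ∈ ρ.Q, ∃ q ∈ σ.Q, h q = q' := by
    intro q' hq'
    obtain ⟨p, hp, hval⟩ := MRS.reach_Pi hq'
    rw [← hPeq] at hp
    obtain ⟨q, hq, hqQ⟩ := MRS.pathFrom_exists hp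
    have h2 := morphism_pathFrom hm hq
    rw [hval] at h2
    exact ⟨q, hqQ, (Option.some_injective _ h2).symm⟩
  have himg : h '' ↑σ.Q = ↑ρ.Q := by
    apply Set.Subset.antisymm
    · rintro x ⟨q, hq, rfl⟩
      exact hm.2.1 q (Finset.mem_coe.mp hq)
    · intro q' hq'
      obtain ⟨q, hq, he⟩ := hsurj q' (Finset.mem_coe.mp hq')
      exact ⟨q, hq, he⟩
  have hinj : Set.InjOn h ↑σ.Q := by
    apply Set.injOn_of_ncard_image_eq _ σ.Q.finite_toSet
    rw [himg, Set.ncard_coe_finset, Set.ncard_coe_finset, hcard_eq]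
  obtain ⟨g, hg⟩ : ∃ g : Nodes → Nodes, ∀ q ∈ σ.Q, g (h q) = q := by
    refine ⟨fun q' => if hq : ∃ q, q ∈ σ.Q ∧ h q = q' then hq.choose else q', ?_⟩
    intro q hq
    have hex : ∃ q₀, q₀ ∈ σ.Q ∧ h q₀ = h q := ⟨q, hq, rfl⟩
    simp only [dif_pos hex]
    exact hinj (Finset.mem_coe.mpr hex.choose_spec.1) (Finset.mem_coe.mpr hq)
      hex.choose_spec.2
  have hg' : ∀ q' ∈ ρ.Q, ∃ q ∈ σ.Q, h q = q' ∧ g q' = q := by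
    intro q' hq'
    obtain ⟨q, hq, he⟩ := hsurj q' hq'
    exact ⟨q, hq, he, by rw [← he, hg q hq]⟩
  apply hnsub
  refine ⟨g, ?_, ?_, ?_, ?_⟩
  · have hid : ∀ a ∈ σ.roots, g (h a) = a := fun a ha => hg a (σ.roots_mem a ha)
    rw [hm.1, List.map_map]
    conv_lhs => rw [← List.map_id σ.roots]
    exact (List.map_congr_left (fun a ha => (hid a ha).symm))
  · intro q' hq'
    obtain ⟨q, hq, _, hgq⟩ := hg' q' hq'
    exact hgq ▸ hq
  · intro q' hq'
    obtain ⟨q, hq, he, hgq⟩ := hg' q' hq'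
    rw [hgq, ← he, ← hθeq q hq]
  · intro q₁ f q₂ hδρ
    have hq₁ : q₁ ∈ ρ.Q := ρ.dom q₁ f (by rw [hδρ]; rfl)
    obtain ⟨q, hq, he, hgq⟩ := hg' q₁ hq₁
    obtain ⟨p, hp, hval⟩ := MRS.reach_Pi hq
    have hρp : ρ.pathFrom p.2 p.1 = some (h q) := morphism_pathFrom hm hval
    have hmem : (p.1 ++ [f], p.2) ∈ ρ.Pi := by
      have : ρ.pathFrom p.2 (p.1 ++ [f]) = some q₂ := by
        rw [MRS.pathFrom_append, hρp]
        simp [pathδ, he, hδρ]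
      simp [MRS.Pi, this]
    rw [← hPeq] at hmem
    obtain ⟨q₃, hq₃, hq₃Q⟩ := MRS.pathFrom_exists hmem
    rw [MRS.pathFrom_append, hval] at hq₃
    have hδσ : σ.δ q f = some q₃ := by
      simpa [pathδ] using hq₃
    have h2 : ρ.δ (h q) f = some (h q₃) := hm.2.2.2 q f q₃ hδσ
    rw [he, hδρ] at h2
    have hq₂ : q₂ = h q₃ := Option.some_injective _ h2
    have hq₃σ : q₃ ∈ σ.Q := σ.closed q f q₃ hδσ
    rw [hgq, hq₂, hg q₃ hq₃σ, hδσ]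

end Main

lemma MRS.rank_nonneg [Finite Feats] (r : Types → ℕ) (θ : Nodes → Types)
    (σ : MRS Nodes Feats) (hσa : σ.Acyclic) : 0 ≤ MRS.rank r θ σ := by
  have hq := σ.card_le_ncard_Pi hσa
  simp only [MRS.rank]
  omega

/-- Subsumption of acyclic MRSs is well-founded: strict subsumption
strictly increases the rank, and consequently there is no infinite strictly
decreasing chain of acyclic MRSs. -/
theorem mrs_acyclic_subsumption_well_founded [Finite Feats] [PartialOrder Types]
    (r : Types → ℕ) (hr : ∀ t t' : Types, t < t' → r t < r t')
    (θ : Nodes → Types) :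
    (∀ σ ρ : MRS Nodes Feats, σ.Acyclic → ρ.Acyclic → MRSStrictlySubsumes θ σ ρ →
      MRS.rank r θ σ < MRS.rank r θ ρ) ∧
    ¬ ∃ A : ℕ → MRS Nodes Feats,
      (∀ i, (A i).Acyclic) ∧ ∀ i, MRSStrictlySubsumes θ (A (i + 1)) (A i) := by
  refine ⟨fun σ ρ hσ hρ hs => rank_lt_of_strict r hr θ σ ρ hσ hρ hs, ?_⟩
  rintro ⟨A, hA, hchain⟩
  have hdec : ∀ i, MRS.rank r θ (A (i + 1)) < MRS.rank r θ (A i) :=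
    fun i => rank_lt_of_strict r hr θ _ _ (hA (i + 1)) (hA i) (hchain i)
  have hnn : ∀ i, 0 ≤ MRS.rank r θ (A i) := fun i => MRS.rank_nonneg r θ (A i) (hA i)
  have hf : ∀ i, (MRS.rank r θ (A (i + 1))).toNat < (MRS.rank r θ (A i)).toNat := by
    intro i
    have h1 := hdec i
    have h2 := hnn (i + 1)
    have h3 := hnn i
    omega
  have hb : ∀ i, (MRS.rank r θ (A i)).toNat + i ≤ (MRS.rank r θ (A 0)).toNat := by
    intro i
    induction i with
    | zero => omega
    | succ n ih => have := hf n; omega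
  have := hb ((MRS.rank r θ (A 0)).toNat + 1)
  omega
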